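/- Let α > 0 be irrational and let (R,H) be a minimally safe rooted s-uniform hypergraph. Then for every S with R ⊂ S ⊂ V(H), the rooted hypergraph (S,H) is rigid. -/

import Mathlib

open scoped Classical

/-- A finite `s`-uniform hypergraph on a vertex set of natural numbers. -/
structure UniformHypergraph (s : ℕ) where
  V : Finset ℕ
  E : Finset (Finset ℕ)
  card_edges : ∀ e ∈ E, e.card = s
  edges_sub : ∀ e ∈ E, e ⊆ V

namespace UniformHypergraph

/-- The density `|E|/|V|` of a hypergraph. -/
noncomputable def density {s : ℕ} (G : UniformHypergraph s) : ℚ :=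
  (G.E.card : ℚ) / (G.V.card : ℚ)

/-- `G` is strictly balanced: every proper subhypergraph with at least one
vertex has strictly smaller density. -/
def StrictlyBalanced {s : ℕ} (G : UniformHypergraph s) : Prop :=
  G.V.Nonempty ∧ ∀ H : UniformHypergraph s, H.V ⊆ G.V → H.E ⊆ G.E → H.V.Nonempty →
    ¬(H.V = G.V ∧ H.E = G.E) → H.density < G.density

/-- The subhypergraph of `G` induced on the vertex set `S`. -/
def restrict {s : ℕ} (G : UniformHypergraph s) (S : Finset ℕ) : UniformHypergraph s where
  V := G.V ∩ S
  E := G.E.filter (fun e => e ⊆ S)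
  card_edges := fun e he => G.card_edges e (Finset.mem_filter.mp he).1
  edges_sub := fun e he a ha => Finset.mem_inter.mpr
    ⟨G.edges_sub e (Finset.mem_filter.mp he).1 ha, (Finset.mem_filter.mp he).2 ha⟩

/-- A cycle `(v 0, e 0, v 1, e 1, …, v (m-1), e (m-1), v m = v 0)` in `G`. -/
def IsCycle {s : ℕ} (G : UniformHypergraph s) (m : ℕ) (v : ℕ → ℕ) (e : ℕ → Finset ℕ) : Prop :=
  0 < m ∧ v m = v 0 ∧ e m = e 0 ∧
  (∀ i < m, e i ∈ G.E) ∧ (∀ i < m, v i ∈ G.V) ∧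
  (∀ i < m, v i ≠ v (i + 1)) ∧ (∀ i < m, e i ≠ e (i + 1)) ∧
  (∀ i < m, v i ∈ e i ∧ v (i + 1) ∈ e i)

/-- `G` is connected: it is nonempty and any two vertices are joined by a
chain of edges. -/
def Connected {s : ℕ} (G : UniformHypergraph s) : Prop :=
  G.V.Nonempty ∧ ∀ u ∈ G.V, ∀ w ∈ G.V,
    Relation.ReflTransGen (fun a b => ∃ e ∈ G.E, a ∈ e ∧ b ∈ e) u w

/-- A tree is a connected hypergraph without cycles. -/
def IsTree {s : ℕ} (G : UniformHypergraph s) : Prop :=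
  G.Connected ∧ ¬ ∃ m v e, G.IsCycle m v e

/-- For a rooted pair: number of nonroot vertices minus `α` times the number of
edges with at least one nonroot vertex, for roots `S` in the hypergraph `K`. -/
noncomputable def exVal {s : ℕ} (α : ℝ) (S : Finset ℕ) (K : UniformHypergraph s) : ℝ :=
  ((K.V \ S).card : ℝ) - ((K.E.filter (fun f => ¬ f ⊆ S)).card : ℝ) * α

/-- The rooted hypergraph `(S, K)` is dense: `v - e·α < 0`. -/
noncomputable def IsDense {s : ℕ} (α : ℝ) (S : Finset ℕ) (K : UniformHypergraph s) : Prop :=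
  exVal α S K < 0

/-- The rooted hypergraph `(S, K)` is sparse: `v - e·α > 0`. -/
noncomputable def IsSparse {s : ℕ} (α : ℝ) (S : Finset ℕ) (K : UniformHypergraph s) : Prop :=
  0 < exVal α S K

/-- `(R, K)` is rigid: every nailextension `(S, K)` with `R ⊆ S ⊊ V(K)` is dense. -/
noncomputable def Rigid {s : ℕ} (α : ℝ) (R : Finset ℕ) (K : UniformHypergraph s) : Prop :=
  ∀ S : Finset ℕ, R ⊆ S → S ⊂ K.V → IsDense α S K

/-- `(R, K)` is safe: every subextension `(R, K|_S)` with `R ⊊ S ⊆ V(K)` is sparse. -/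
noncomputable def Safe {s : ℕ} (α : ℝ) (R : Finset ℕ) (K : UniformHypergraph s) : Prop :=
  ∀ S : Finset ℕ, R ⊂ S → S ⊆ K.V → IsSparse α R (K.restrict S)

/-- `(R, K)` is minimally safe: safe, with no safe nailextension. -/
noncomputable def MinimallySafe {s : ℕ} (α : ℝ) (R : Finset ℕ) (K : UniformHypergraph s) : Prop :=
  Safe α R K ∧ ¬ ∃ S : Finset ℕ, R ⊂ S ∧ S ⊂ K.V ∧ Safe α S K

/-- A rigid `t`-chain `x 0 ⊆ x 1 ⊆ … ⊆ x k` in `G`: each step adds at most `t`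
vertices and each `(x i, G|_{x (i+1)})` is rigid. -/
noncomputable def IsRigidChain {s : ℕ} (α : ℝ) (G : UniformHypergraph s) (t k : ℕ)
    (x : ℕ → Finset ℕ) : Prop :=
  (∀ i < k, x i ⊆ x (i + 1)) ∧ (∀ i < k, (x (i + 1) \ x i).card ≤ t) ∧
  (∀ i ≤ k, x i ⊆ G.V) ∧ (∀ i < k, Rigid α (x i) (G.restrict (x (i + 1))))

/-- `C` is the `t`-closure of `X` in `G`: it is the endpoint of a rigid
`t`-chain starting at `X` and contains the endpoint of every such chain. -/
noncomputable def IsTClosure {s : ℕ} (α : ℝ) (G : UniformHypergraph s) (t : ℕ)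
    (X C : Finset ℕ) : Prop :=
  (∃ k x, IsRigidChain α G t k x ∧ x 0 = X ∧ x k = C) ∧
  ∀ k' x', IsRigidChain α G t k' x' → x' 0 = X → x' k' ⊆ C

end UniformHypergraph

open UniformHypergraph

/-- The possible edges of an `s`-uniform hypergraph on `Fin n`. -/
def edgeCandidates (s n : ℕ) : Finset (Finset (Fin n)) :=
  Finset.univ.filter (fun e => e.card = s)

/-- The probability of the event `A` under the binomial random `s`-uniform
hypergraph `G^s(n,p)`: each of the `C(n,s)` possible edges appears
independently with probability `p`. -/
noncomputable def hyperProb (s n : ℕ) (p : ℝ) (A : Set (Finset (Finset (Fin n)))) : ℝ :=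
  ∑ E ∈ (edgeCandidates s n).powerset,
    if E ∈ A then p ^ E.card * (1 - p) ^ ((edgeCandidates s n).card - E.card) else 0

/-- The `s`-uniform hypergraph on vertex set `{0,…,n-1}` determined by an
edge set over `Fin n`. -/
noncomputable def ofEdges (s n : ℕ) (E : Finset (Finset (Fin n))) : UniformHypergraph s where
  V := Finset.range n
  E := (E.filter (fun e => e.card = s)).image (fun e => e.image Fin.val)
  card_edges := by
    intro f hf
    simp only [Finset.mem_image, Finset.mem_filter] at hf
    obtain ⟨e, ⟨_, hcard⟩, rfl⟩ := hf
    rw [Finset.card_image_of_injective _ Fin.val_injective]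
    exact hcard
  edges_sub := by
    intro f hf a ha
    simp only [Finset.mem_image, Finset.mem_filter] at hf
    obtain ⟨e, _, rfl⟩ := hf
    simp only [Finset.mem_image] at ha
    obtain ⟨b, _, rfl⟩ := ha
    exact Finset.mem_range.mpr b.isLt

lemma phi_add {s : ℕ} (α : ℝ) (H : UniformHypergraph s) (X Y : Finset ℕ)
    (hXY : X ⊆ Y) (hY : Y ⊆ H.V) :
    exVal α X H = exVal α X (H.restrict Y) + exVal α Y H := by
  unfold exVal restrict
  simp only [Finset.filter_filter]
  rw [Finset.inter_eq_right.mpr hY]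
  have hv : ((H.V \ X).card) = (Y \ X).card + (H.V \ Y).card := by
    rw [Finset.card_sdiff_of_subset (hXY.trans hY), Finset.card_sdiff_of_subset hXY, Finset.card_sdiff_of_subset hY]
    have h1 := Finset.card_le_card hXY
    have h2 := Finset.card_le_card hY
    omega
  have he : (H.E.filter (fun f => ¬ f ⊆ X)).card
      = (H.E.filter (fun e => e ⊆ Y ∧ ¬ e ⊆ X)).card
        + (H.E.filter (fun f => ¬ f ⊆ Y)).card := by
    have hsplit := Finset.card_filter_add_card_filter_not
      (s := H.E.filter (fun f => ¬ f ⊆ X)) (p := fun e => e ⊆ Y)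
    rw [Finset.filter_filter, Finset.filter_filter] at hsplit
    have h1 : H.E.filter (fun e => ¬ e ⊆ X ∧ e ⊆ Y)
        = H.E.filter (fun e => e ⊆ Y ∧ ¬ e ⊆ X) := by
      apply Finset.filter_congr; intro e _; exact and_comm
    have h2 : H.E.filter (fun e => ¬ e ⊆ X ∧ ¬ e ⊆ Y)
        = H.E.filter (fun e => ¬ e ⊆ Y) := by
      apply Finset.filter_congr; intro e _
      simp only [and_iff_right_iff_imp]
      intro hnY hX
      exact hnY (hX.trans hXY)
    rw [h1, h2] at hsplit
    omega
  rw [hv, he]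
  push_cast
  ring

lemma exVal_top {s : ℕ} (α : ℝ) (H : UniformHypergraph s) : exVal α H.V H = 0 := by
  unfold exVal
  rw [Finset.sdiff_self, Finset.filter_false_of_mem (fun e he => by
    simp only [not_not]; exact H.edges_sub e he)]
  simp

lemma exVal_pos_of_nonneg {s : ℕ} {α : ℝ} (hirr : Irrational α) {X : Finset ℕ}
    {K : UniformHypergraph s} (hne : (K.V \ X).Nonempty) (h : 0 ≤ exVal α X K) :
    0 < exVal α X K := by
  rcases h.lt_or_eq with h | h
  · exact h
  exfalso
  unfold exVal at h
  set v := (K.V \ X).card with hv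
  set e := (K.E.filter (fun f => ¬ f ⊆ X)).card with hedef
  by_cases he : e = 0
  · rw [he] at h
    simp only [Nat.cast_zero, zero_mul, sub_zero] at h
    have hvpos : 0 < v := Finset.card_pos.mpr hne
    have : (0:ℝ) < (v:ℝ) := Nat.cast_pos.mpr hvpos
    linarith
  · have hα : α = (v : ℝ) / (e : ℝ) := by
      have he' : (e : ℝ) ≠ 0 := Nat.cast_ne_zero.mpr he
      field_simp
      linarith
    rw [hα] at hirr
    have : ((v : ℝ) / (e : ℝ)) = (((v : ℚ) / (e : ℚ) : ℚ) : ℝ) := by push_cast; ring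
    rw [this] at hirr
    exact (Rat.not_irrational _) hirr

/-- if `(R,H)` is minimally safe then `(S,H)` is rigid for every
`R ⊊ S ⊊ V(H)`. -/
theorem stmt12 (s : ℕ) (hs : 2 ≤ s) (α : ℝ) (hα : 0 < α) (hirr : Irrational α)
    (H : UniformHypergraph s) (R : Finset ℕ) (hR : R ⊂ H.V)
    (hms : MinimallySafe α R H) :
    ∀ S : Finset ℕ, R ⊂ S → S ⊂ H.V → Rigid α S H := by
  intro S hRS hSV T hST hTV
  by_contra hden
  have hTpos : 0 < exVal α T H :=
    exVal_pos_of_nonneg hirr (Finset.sdiff_nonempty.mpr hTV.2) (le_of_not_gt hden)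
  classical
  let 𝒯 : Finset (Finset ℕ) :=
    H.V.powerset.filter (fun T' => S ⊆ T' ∧ T' ⊂ H.V ∧ 0 < exVal α T' H)
  have hTmem : T ∈ 𝒯 := by
    simp only [𝒯, Finset.mem_filter, Finset.mem_powerset]
    exact ⟨hTV.1, hST, hTV, hTpos⟩
  obtain ⟨M, hM, hMmax⟩ := 𝒯.exists_max_image (fun T' => T'.card) ⟨T, hTmem⟩
  simp only [𝒯, Finset.mem_filter, Finset.mem_powerset] at hM
  obtain ⟨hMV', hSM, hMV, hMpos⟩ := hM
  have hsafe : Safe α M H := by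
    intro U hMU hUV
    unfold IsSparse
    by_contra hUs
    push_neg at hUs
    have hadd := phi_add α H M U hMU.1 hUV
    rcases eq_or_ne U H.V with rfl | hUne
    · rw [exVal_top] at hadd
      linarith
    · have hUss : U ⊂ H.V := lt_of_le_of_ne hUV hUne
      have hUpos : 0 < exVal α U H := by linarith
      have hUmem : U ∈ 𝒯 := by
        simp only [𝒯, Finset.mem_filter, Finset.mem_powerset]
        exact ⟨hUV, hSM.trans hMU.1, hUss, hUpos⟩
      have := hMmax U hUmem
      have := Finset.card_lt_card hMU
      omega
  exact hms.2 ⟨M, lt_of_lt_of_le hRS hSM, hMV, hsafe⟩
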